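/- arXiv:1303.7415 — 2 statements merged into one kernel-verified Lean document; each statement's English description precedes it below -/
import Mathlib

section
/- Let f : closure(D²) → ℝ be continuous on the closed unit disk in ℂ, C¹ on the closed disk, C² and weakly subharmonic (Δf ≥ 0) on the open disk. Suppose f attains its maximum at a boundary point z₀ ∈ ∂D² and f(z) < f(z₀) for all z ≠ z₀. Then for every vector X ∈ ℂ pointing transversely out of the disk at z₀ (i.e. with ⟨X, z₀⟩ > 0), the directional derivative of f at z₀ in direction X is strictly positive. -/
open Complex Metric Set

/-- Laplacian of a function on `ℂ ≅ ℝ²`. -/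
noncomputable def lap (f : ℂ → ℝ) (z : ℂ) : ℝ :=
  fderiv ℝ (fun w => fderiv ℝ f w 1) z 1 +
    fderiv ℝ (fun w => fderiv ℝ f w Complex.I) z Complex.I

/-- squared norm as explicit polynomial -/
noncomputable def qf (z : ℂ) : ℝ := z.re ^ 2 + z.im ^ 2

noncomputable def qD (z : ℂ) : ℂ →L[ℝ] ℝ :=
  (2 * z.re) • Complex.reCLM + (2 * z.im) • Complex.imCLM

lemma qD_apply (z e : ℂ) : qD z e = 2 * z.re * e.re + 2 * z.im * e.im := by
  simp [qD]

lemma hasFDerivAt_qf (z : ℂ) : HasFDerivAt qf (qD z) z := by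
  have h1 : HasFDerivAt (fun w : ℂ => w.re) Complex.reCLM z := Complex.reCLM.hasFDerivAt
  have h2 : HasFDerivAt (fun w : ℂ => w.im) Complex.imCLM z := Complex.imCLM.hasFDerivAt
  have := ((h1.mul h1).add (h2.mul h2))
  have e1 : qf = (((fun w : ℂ => w.re) * fun w => w.re) + (fun w : ℂ => w.im) * fun w => w.im) := by
    funext w; simp only [qf, Pi.add_apply, Pi.mul_apply]; ring
  have e2 : qD z = z.re • reCLM + z.re • reCLM + (z.im • imCLM + z.im • imCLM) := by
    apply ContinuousLinearMap.ext; intro w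
    simp only [qD, ContinuousLinearMap.add_apply, ContinuousLinearMap.smul_apply,
      Complex.reCLM_apply, Complex.imCLM_apply, smul_eq_mul]; ring
  rw [e1, e2]; exact this

lemma qf_eq_sq_norm (z : ℂ) : qf z = ‖z‖ ^ 2 := by
  rw [← Complex.normSq_eq_norm_sq]
  simp [qf, Complex.normSq_apply]; ring

lemma qf_pos {z : ℂ} (hz : z ≠ 0) : 0 < qf z := by
  rw [qf_eq_sq_norm]
  have : ‖z‖ ≠ 0 := norm_ne_zero_iff.mpr hz
  positivity

/-- barrier function -/
noncomputable def vb (z : ℂ) : ℝ := (qf z)⁻¹ - 1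

noncomputable def vD (z : ℂ) : ℂ →L[ℝ] ℝ := (-((qf z) ^ 2)⁻¹) • qD z

lemma hasFDerivAt_vb {z : ℂ} (hz : z ≠ 0) : HasFDerivAt vb (vD z) z := by
  have h := ((hasDerivAt_inv (qf_pos hz).ne').comp_hasFDerivAt z (hasFDerivAt_qf z)).sub_const 1
  exact h

lemma fderiv_vb {z : ℂ} (hz : z ≠ 0) (e : ℂ) :
    fderiv ℝ vb z e = -((qf z) ^ 2)⁻¹ * (2 * z.re * e.re + 2 * z.im * e.im) := by
  rw [(hasFDerivAt_vb hz).fderiv]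
  simp [vD, qD_apply]

noncomputable def eD (e : ℂ) : ℂ →L[ℝ] ℝ :=
  (2 * e.re) • Complex.reCLM + (2 * e.im) • Complex.imCLM

/-- explicit formula for the first derivative of vb in direction e -/
noncomputable def Ge (e w : ℂ) : ℝ := -((qf w) ^ 2)⁻¹ * (2 * e.re * w.re + 2 * e.im * w.im)

lemma fderiv_vb_eq_Ge {w : ℂ} (hw : w ≠ 0) (e : ℂ) : fderiv ℝ vb w e = Ge e w := by
  rw [fderiv_vb hw e, Ge]; ring

lemma hasFDerivAt_A {z : ℂ} (hz : z ≠ 0) :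
    HasFDerivAt (fun w => -((qf w) ^ 2)⁻¹) ((2 * ((qf z) ^ 3)⁻¹) • qD z) z := by
  have hq := qf_pos hz
  have h1 : HasDerivAt (fun s : ℝ => -(s ^ 2)⁻¹) (2 * ((qf z) ^ 3)⁻¹) (qf z) := by
    have := ((hasDerivAt_pow 2 (qf z)).inv (by positivity)).neg
    refine this.congr_deriv ?_
    have hq0 : qf z ≠ 0 := hq.ne'
    field_simp
    ring
  exact h1.comp_hasFDerivAt z (hasFDerivAt_qf z)

lemma hasFDerivAt_B (e z : ℂ) :
    HasFDerivAt (fun w : ℂ => 2 * e.re * w.re + 2 * e.im * w.im) (eD e) z := by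
  have h := (eD e).hasFDerivAt (x := z)
  have : ⇑(eD e) = fun w : ℂ => 2 * e.re * w.re + 2 * e.im * w.im := by
    funext w; simp [eD]
  rwa [this] at h

lemma hasFDerivAt_Ge {z : ℂ} (hz : z ≠ 0) (e : ℂ) :
    HasFDerivAt (Ge e)
      ((-((qf z) ^ 2)⁻¹) • eD e +
        (2 * e.re * z.re + 2 * e.im * z.im) • ((2 * ((qf z) ^ 3)⁻¹) • qD z)) z :=
  (hasFDerivAt_A hz).mul (hasFDerivAt_B e z)

lemma eventually_fderiv_vb (e : ℂ) {z : ℂ} (hz : z ≠ 0) :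
    (fun w => fderiv ℝ vb w e) =ᶠ[nhds z] Ge e := by
  filter_upwards [isOpen_ne.mem_nhds hz] with w hw
  exact fderiv_vb_eq_Ge hw e

lemma differentiableAt_fderiv_vb {z : ℂ} (hz : z ≠ 0) (e : ℂ) :
    DifferentiableAt ℝ (fun w => fderiv ℝ vb w e) z :=
  (Filter.EventuallyEq.differentiableAt_iff (eventually_fderiv_vb e hz)).mpr
    (hasFDerivAt_Ge hz e).differentiableAt

lemma second_vb {z : ℂ} (hz : z ≠ 0) (e : ℂ) :
    fderiv ℝ (fun w => fderiv ℝ vb w e) z e =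
      -((qf z) ^ 2)⁻¹ * (2 * e.re ^ 2 + 2 * e.im ^ 2) +
        (2 * e.re * z.re + 2 * e.im * z.im) ^ 2 * (2 * ((qf z) ^ 3)⁻¹) := by
  rw [(eventually_fderiv_vb e hz).fderiv_eq, (hasFDerivAt_Ge hz e).fderiv]
  simp [eD, qD_apply]
  ring

lemma lap_vb_pos {z : ℂ} (hz : z ≠ 0) : lap vb z = 4 * ((qf z) ^ 2)⁻¹ := by
  have hq := (qf_pos hz).ne'
  rw [lap, second_vb hz 1, second_vb hz Complex.I]
  simp only [Complex.one_re, Complex.one_im, Complex.I_re, Complex.I_im]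
  have hqf : z.re ^ 2 + z.im ^ 2 = qf z := rfl
  field_simp
  linear_combination 8 * hqf

/-- Second derivative test: at an interior local maximum, the second directional
derivative is nonpositive. -/
lemma second_deriv_nonpos (g : ℂ → ℝ) (p e : ℂ) {U : Set ℂ} (hU : IsOpen U) (hp : p ∈ U)
    (hg : ∀ z ∈ U, DifferentiableAt ℝ g z)
    (hg' : DifferentiableAt ℝ (fun w => fderiv ℝ g w e) p)
    (hmax : ∀ z ∈ U, g z ≤ g p) :
    fderiv ℝ (fun w => fderiv ℝ g w e) p e ≤ 0 := by
  by_contra hM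
  push_neg at hM
  set M := fderiv ℝ (fun w => fderiv ℝ g w e) p e with hMdef
  -- the curve
  set γ : ℝ → ℂ := fun t => p + t • e with hγdef
  have hγ0 : γ 0 = p := by simp [hγdef]
  have hγd : ∀ t : ℝ, HasDerivAt γ e t := by
    intro t
    have h1 : HasDerivAt (fun t : ℝ => t • e) ((1:ℝ) • e) t := (hasDerivAt_id t).smul_const e
    simpa [hγdef] using h1.const_add p
  -- ψ = first directional derivative along the curve
  set ψ : ℝ → ℝ := fun t => fderiv ℝ g (γ t) e with hψdef
  have hψ0 : ψ 0 = 0 := by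
    have hloc : IsLocalMax g p := by
      filter_upwards [hU.mem_nhds hp] with z hz using hmax z hz
    simp [hψdef, hγ0, hloc.fderiv_eq_zero]
  have hψd : HasDerivAt ψ M 0 := by
    have h2 : HasFDerivAt (fun w => fderiv ℝ g w e) (fderiv ℝ (fun w => fderiv ℝ g w e) p) (γ 0) := by
      rw [hγ0]; exact hg'.hasFDerivAt
    exact h2.comp_hasDerivAt 0 (hγd 0)
  -- eventually the curve is in U
  have hU' : ∀ᶠ t in nhds (0:ℝ), γ t ∈ U := by
    have hc : ContinuousAt γ 0 := (hγd 0).continuousAt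
    have := hc.preimage_mem_nhds (by rw [hγ0]; exact hU.mem_nhds hp)
    filter_upwards [this] with t ht using ht
  obtain ⟨δ, hδpos, hδ⟩ := Metric.eventually_nhds_iff.mp hU'
  -- eventually ψ is positive on the right
  have hslope : Filter.Tendsto (slope ψ 0) (nhdsWithin 0 (Set.Ioi 0)) (nhds M) := by
    have := hasDerivAt_iff_tendsto_slope.mp hψd
    refine this.mono_left (nhdsWithin_mono _ ?_)
    intro t ht
    exact Set.mem_compl_singleton_iff.mpr (ne_of_gt ht)
  have hev : ∀ᶠ t in nhdsWithin 0 (Set.Ioi 0), 0 < ψ t := by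
    have h1 : ∀ᶠ t in nhdsWithin 0 (Set.Ioi 0), 0 < slope ψ 0 t :=
      hslope.eventually (eventually_gt_nhds hM)
    filter_upwards [h1, self_mem_nhdsWithin] with t h2 (h3 : 0 < t)
    rw [slope_def_field] at h2
    have h4 : 0 < ψ t / t := by simpa [hψ0] using h2
    have h5 : ψ t = ψ t / t * t := (div_mul_cancel₀ _ (ne_of_gt h3)).symm
    rw [h5]; exact mul_pos h4 h3
  obtain ⟨u, hu, huA⟩ := mem_nhdsGT_iff_exists_Ioo_subset.mp hev
  -- pick t
  have hupos : (0:ℝ) < u := hu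
  set t : ℝ := min (δ / 2) (u / 2) with htdef
  have htpos : 0 < t := lt_min (by linarith) (by linarith)
  have htδ : t < δ := lt_of_le_of_lt (min_le_left _ _) (by linarith)
  have htu : t < u := lt_of_le_of_lt (min_le_right _ _) (by linarith)
  have hmemU : ∀ s ∈ Set.Icc 0 t, γ s ∈ U := by
    intro s hs
    apply hδ
    rw [Real.dist_eq, sub_zero, _root_.abs_of_nonneg hs.1]
    exact lt_of_le_of_lt hs.2 htδ
  have hφd : ∀ s ∈ Set.Icc 0 t, HasDerivAt (fun r => g (γ r)) (ψ s) s := fun s hs =>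
    (hg (γ s) (hmemU s hs)).hasFDerivAt.comp_hasDerivAt s (hγd s)
  have hcont : ContinuousOn (fun r => g (γ r)) (Set.Icc 0 t) := fun s hs =>
    (hφd s hs).continuousAt.continuousWithinAt
  obtain ⟨c, hc, hceq⟩ := exists_hasDerivAt_eq_slope (fun r => g (γ r)) ψ htpos hcont
    (fun x hx => hφd x ⟨le_of_lt hx.1, le_of_lt hx.2⟩)
  have hψc : 0 < ψ c := huA ⟨hc.1, lt_trans hc.2 htu⟩
  rw [hceq] at hψc
  have hgt : g p < g (γ t) := by
    rw [hγ0] at hψc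
    have := mul_pos hψc (sub_pos.mpr htpos)
    rw [div_mul_cancel₀] at this
    · linarith
    · exact ne_of_gt (sub_pos.mpr htpos)
  exact absurd (hmax (γ t) (hmemU t ⟨le_of_lt htpos, le_refl t⟩)) (not_le.mpr hgt)

lemma diff_fderiv_f {f : ℂ → ℝ} {U : Set ℂ} (hU : IsOpen U) {z : ℂ} (hz : z ∈ U)
    (hf : ContDiffOn ℝ 2 f U) (e : ℂ) :
    DifferentiableAt ℝ (fun w => fderiv ℝ f w e) z := by
  have h1 : ContDiffAt ℝ 2 f z := hf.contDiffAt (hU.mem_nhds hz)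
  have h2 : ContDiffAt ℝ 1 (fderiv ℝ f) z := h1.fderiv_right (by norm_num)
  have h3 : DifferentiableAt ℝ (fderiv ℝ f) z := h2.differentiableAt one_ne_zero
  exact ((ContinuousLinearMap.apply ℝ ℝ e).differentiable.differentiableAt).comp z h3

lemma lap_decomp (f : ℂ → ℝ) (ε : ℝ) {U : Set ℂ} (hU : IsOpen U) {z : ℂ} (hz : z ∈ U)
    (hf : ContDiffOn ℝ 2 f U) (h0 : (0:ℂ) ∉ U) :
    (∀ e : ℂ, DifferentiableAt ℝ (fun w => fderiv ℝ (fun y => f y + ε * vb y) w e) z) ∧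
      lap (fun y => f y + ε * vb y) z = lap f z + ε * lap vb z := by
  have hzne : z ≠ 0 := fun h => h0 (h ▸ hz)
  have hdf : ∀ w ∈ U, DifferentiableAt ℝ f w := fun w hw =>
    (hf.contDiffAt (hU.mem_nhds hw)).differentiableAt (by norm_num)
  have hdv : ∀ w ∈ U, DifferentiableAt ℝ vb w := fun w hw =>
    (hasFDerivAt_vb (fun h => h0 (h ▸ hw))).differentiableAt
  have hev : ∀ e : ℂ, (fun w => fderiv ℝ (fun y => f y + ε * vb y) w e) =ᶠ[nhds z]
      (fun w => fderiv ℝ f w e + ε * fderiv ℝ vb w e) := by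
    intro e
    filter_upwards [hU.mem_nhds hz] with w hw
    rw [fderiv_fun_add (hdf w hw) ((hdv w hw).const_mul ε)]
    simp [fderiv_const_mul (hdv w hw) ε]
  have hde : ∀ e : ℂ, DifferentiableAt ℝ
      (fun w => fderiv ℝ f w e + ε * fderiv ℝ vb w e) z :=
    fun e => (diff_fderiv_f hU hz hf e).add ((differentiableAt_fderiv_vb hzne e).const_mul ε)
  constructor
  · intro e
    exact (Filter.EventuallyEq.differentiableAt_iff (hev e)).mpr (hde e)
  · have key : ∀ e : ℂ, fderiv ℝ (fun w => fderiv ℝ (fun y => f y + ε * vb y) w e) z e =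
        fderiv ℝ (fun w => fderiv ℝ f w e) z e +
          ε * fderiv ℝ (fun w => fderiv ℝ vb w e) z e := by
      intro e
      rw [(hev e).fderiv_eq]
      rw [fderiv_fun_add (diff_fderiv_f hU hz hf e) ((differentiableAt_fderiv_vb hzne e).const_mul ε)]
      simp [fderiv_const_mul (differentiableAt_fderiv_vb hzne e) ε]
    rw [lap, lap, lap, key 1, key Complex.I]
    ring

lemma half_le_of_sq {a : ℝ} (h : 1/4 ≤ a^2) (h0 : 0 ≤ a) : 1/2 ≤ a := by nlinarith

lemma le_one_of_sq {a : ℝ} (h : a^2 ≤ 1) (h0 : 0 ≤ a) : a ≤ 1 := by nlinarith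

lemma continuous_qf : Continuous qf := by
  unfold qf; fun_prop

/-- Hopf-type boundary lemma on the closed unit disk: a weakly subharmonic function
attaining its strict maximum at a boundary point has strictly positive outward
directional derivative there. -/
theorem stmt1 (f : ℂ → ℝ) (z₀ : ℂ)
    (hf1 : ContDiffOn ℝ 1 f (Metric.closedBall 0 1))
    (hf2 : ContDiffOn ℝ 2 f (Metric.ball 0 1))
    (hsub : ∀ z ∈ Metric.ball (0 : ℂ) 1, 0 ≤ lap f z)
    (hz₀ : z₀ ∈ Metric.sphere (0 : ℂ) 1)
    (hmax : ∀ z ∈ Metric.closedBall (0 : ℂ) 1, z ≠ z₀ → f z < f z₀)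
    (X : ℂ) (hX : 0 < (X * (starRingEnd ℂ) z₀).re) :
    0 < fderivWithin ℝ f (Metric.closedBall 0 1) z₀ X := by
  have hz1 : ‖z₀‖ = 1 := by simpa using hz₀
  have hz₀ne : z₀ ≠ 0 := by intro h; rw [h] at hz1; simp at hz1
  have hz₀S : z₀ ∈ Metric.closedBall (0:ℂ) 1 := by
    simp [Metric.mem_closedBall, dist_zero_right, hz1]
  set S := Metric.closedBall (0:ℂ) 1 with hSdef
  set K : Set ℂ := S \ Metric.ball 0 (1/2) with hKdef
  have hKmem : ∀ z : ℂ, z ∈ K ↔ 1/2 ≤ ‖z‖ ∧ ‖z‖ ≤ 1 := by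
    intro z
    simp only [hKdef, hSdef, Set.mem_diff, Metric.mem_closedBall, Metric.mem_ball,
      dist_zero_right, not_lt]
    tauto
  have hKcompact : IsCompact K := (isCompact_closedBall _ _).diff Metric.isOpen_ball
  have hz₀K : z₀ ∈ K := (hKmem z₀).mpr ⟨by rw [hz1]; norm_num, le_of_eq hz1⟩
  have hKne : ∀ z ∈ K, z ≠ 0 := by
    intro z hz h
    have := ((hKmem z).mp hz).1
    rw [h] at this; simp at this; linarith
  have hKS : K ⊆ S := Set.diff_subset
  -- value of qf, vb on norms
  have hqf_of_norm : ∀ z : ℂ, qf z = ‖z‖ ^ 2 := qf_eq_sq_norm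
  have hvbz₀ : vb z₀ = 0 := by
    rw [vb, hqf_of_norm, hz1]; norm_num
  -- max of f on inner sphere
  have hsph_sub : Metric.sphere (0:ℂ) (1/2) ⊆ S := by
    intro z hz
    simp only [Metric.mem_sphere, dist_zero_right] at hz
    simp [hSdef, Metric.mem_closedBall, dist_zero_right, hz]; norm_num
  obtain ⟨qm, hqmsph, hqmmax⟩ := (isCompact_sphere (0:ℂ) (1/2)).exists_isMaxOn
    (NormedSpace.sphere_nonempty.mpr (by norm_num))
    (hf1.continuousOn.mono hsph_sub)
  have hqmnorm : ‖qm‖ = 1/2 := by simpa using hqmsph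
  have hqmlt : f qm < f z₀ := by
    refine hmax qm (hsph_sub hqmsph) ?_
    intro h
    rw [h, hz1] at hqmnorm; norm_num at hqmnorm
  -- the perturbation
  set ε : ℝ := (f z₀ - f qm) / 6 with hεdef
  have hεpos : 0 < ε := by rw [hεdef]; linarith
  set g : ℂ → ℝ := fun z => f z + ε * vb z with hgdef
  have hgz₀ : g z₀ = f z₀ := by rw [hgdef]; simp [hvbz₀]
  -- continuity of g on K
  have hvbcont : ContinuousOn vb K := by
    apply ContinuousOn.sub _ continuousOn_const
    exact continuous_qf.continuousOn.inv₀ fun z hz => (qf_pos (hKne z hz)).ne'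
  have hgcont : ContinuousOn g K :=
    (hf1.continuousOn.mono hKS).add (continuousOn_const.mul hvbcont)
  obtain ⟨p, hpK, hpmax⟩ := hKcompact.exists_isMaxOn ⟨z₀, hz₀K⟩ hgcont
  have hpmax' : ∀ z ∈ K, g z ≤ g p := fun z hz => hpmax hz
  obtain ⟨hp12, hp1⟩ := (hKmem p).mp hpK
  -- main claim: max value is f z₀
  have key : ∀ z ∈ K, g z ≤ f z₀ := by
    have hgp : g p ≤ f z₀ := by
      rcases eq_or_lt_of_le hp1 with h1 | h1
      · -- p on outer circle
        have hvbp : vb p = 0 := by rw [vb, hqf_of_norm, h1]; norm_num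
        rw [hgdef]; simp only [hvbp, mul_zero, add_zero]
        by_cases hpz : p = z₀
        · rw [hpz]
        · exact le_of_lt (hmax p (hKS hpK) hpz)
      rcases eq_or_lt_of_le hp12 with h2 | h2
      · -- p on inner circle: contradiction
        exfalso
        have hpsph : p ∈ Metric.sphere (0:ℂ) (1/2) := by
          simp [Metric.mem_sphere, dist_zero_right, h2.symm]
        have hfp : f p ≤ f qm := hqmmax hpsph
        have hvbp : vb p = 3 := by
          rw [vb, hqf_of_norm, ← h2]; norm_num
        have h3 : g z₀ ≤ g p := hpmax' z₀ hz₀K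
        rw [hgz₀, hgdef] at h3
        simp only [hvbp] at h3
        rw [hεdef] at h3
        linarith
      · -- p in the interior: contradiction with subharmonicity
        exfalso
        set U : Set ℂ := {z : ℂ | 1/2 < ‖z‖} ∩ {z : ℂ | ‖z‖ < 1} with hUdef
        have hUopen : IsOpen U :=
          (isOpen_lt continuous_const continuous_norm).inter
            (isOpen_lt continuous_norm continuous_const)
        have hpU : p ∈ U := ⟨h2, h1⟩
        have hUK : U ⊆ K := fun z hz => (hKmem z).mpr ⟨le_of_lt hz.1, le_of_lt hz.2⟩
        have hUball : U ⊆ Metric.ball (0:ℂ) 1 := fun z hz => by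
          simp [Metric.mem_ball, dist_zero_right]; exact hz.2
        have hU0 : (0:ℂ) ∉ U := by
          intro h
          have := h.1
          simp only [Set.mem_setOf_eq, norm_zero] at this
          linarith
        obtain ⟨hdiff, hlapeq⟩ := lap_decomp f ε hUopen hpU (hf2.mono hUball) hU0
        have hgd : ∀ z ∈ U, DifferentiableAt ℝ g z := by
          intro z hz
          have h1 := (hf2.contDiffAt (Metric.isOpen_ball.mem_nhds (hUball hz))).differentiableAt
            (by norm_num)
          have h2 := (hasFDerivAt_vb (fun h => hU0 (h ▸ hz))).differentiableAt
          exact h1.add (h2.const_mul ε)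
        have hUmax : ∀ z ∈ U, g z ≤ g p := fun z hz => hpmax' z (hUK hz)
        have hs1 := second_deriv_nonpos g p 1 hUopen hpU hgd (hdiff 1) hUmax
        have hs2 := second_deriv_nonpos g p Complex.I hUopen hpU hgd (hdiff Complex.I) hUmax
        have hlap_nonpos : lap g p ≤ 0 := by
          rw [lap]; linarith
        have hlap_pos : 0 < lap g p := by
          rw [hlapeq, lap_vb_pos (fun h => hU0 (h ▸ hpU))]
          have hfp0 : 0 ≤ lap f p := hsub p (hUball hpU)
          have hqp : 0 < qf p := qf_pos (fun h => hU0 (h ▸ hpU))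
          have : 0 < ε * (4 * (qf p ^ 2)⁻¹) := by positivity
          linarith
        linarith
    intro z hz
    exact le_trans (hpmax' z hz) hgp
  -- Now the derivative estimate along the segment t ↦ z₀ - t•X
  set c : ℝ := (X * (starRingEnd ℂ) z₀).re with hcdef
  have hc : c = X.re * z₀.re + X.im * z₀.im := by
    rw [hcdef, Complex.mul_re]
    simp [Complex.conj_re, Complex.conj_im]
  have hcpos : 0 < c := hX
  have hqfz₀ : qf z₀ = 1 := by rw [hqf_of_norm, hz1]; norm_num
  have hqfz₀' : z₀.re ^ 2 + z₀.im ^ 2 = 1 := hqfz₀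
  have hqX : 0 ≤ qf X := by rw [hqf_of_norm]; positivity
  set t₀ : ℝ := min (c / (qf X + 1)) (1 / (4 * c)) with ht₀def
  have ht₀pos : 0 < t₀ := lt_min (by positivity) (by positivity)
  have hγmem : ∀ t ∈ Set.Icc (0:ℝ) t₀, z₀ - t • X ∈ K := by
    intro t ht
    have ht0 : 0 ≤ t := ht.1
    have htc : t * (qf X + 1) ≤ c := by
      have h1 : t ≤ c / (qf X + 1) := le_trans ht.2 (min_le_left _ _)
      have h2 : (0:ℝ) < qf X + 1 := by linarith
      calc t * (qf X + 1) ≤ (c / (qf X + 1)) * (qf X + 1) := by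
            apply mul_le_mul_of_nonneg_right h1 (le_of_lt h2)
        _ = c := div_mul_cancel₀ _ (ne_of_gt h2)
    have htc2 : 2 * t * c ≤ 1 / 2 := by
      have h1 : t ≤ 1 / (4 * c) := le_trans ht.2 (min_le_right _ _)
      have h2 : (0:ℝ) < 4 * c := by linarith
      have := mul_le_mul_of_nonneg_right h1 (le_of_lt hcpos)
      rw [div_mul_eq_mul_div, one_mul] at this
      have h3 : c / (4 * c) = 1 / 4 := by
        field_simp
      rw [h3] at this
      linarith
    have hre : (z₀ - t • X).re = z₀.re - t * X.re := by
      simp [Complex.sub_re, Complex.real_smul]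
    have him : (z₀ - t • X).im = z₀.im - t * X.im := by
      simp [Complex.sub_im, Complex.real_smul]
    have hqval : qf (z₀ - t • X) = 1 - 2 * t * c + t ^ 2 * qf X := by
      rw [qf, hre, him]
      have hqXd : qf X = X.re ^ 2 + X.im ^ 2 := rfl
      rw [hqXd]
      linear_combination hqfz₀' + 2 * t * hc
    have hexp : t * (qf X + 1) = t * qf X + t := by ring
    have h4a : t * qf X ≤ c := by linarith
    have h4b : t * (t * qf X) ≤ t * c := mul_le_mul_of_nonneg_left h4a ht0
    have h4c : t ^ 2 * qf X = t * (t * qf X) := by ring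
    have htc0 : 0 ≤ t * c := mul_nonneg ht0 (le_of_lt hcpos)
    have hub : qf (z₀ - t • X) ≤ 1 := by
      rw [hqval]; linarith
    have hlb : 1 / 4 ≤ qf (z₀ - t • X) := by
      rw [hqval]
      have h5 : 0 ≤ t ^ 2 * qf X := mul_nonneg (sq_nonneg t) hqX
      linarith
    rw [hqf_of_norm] at hub hlb
    refine (hKmem _).mpr ⟨?_, ?_⟩
    · exact half_le_of_sq hlb (norm_nonneg _)
    · exact le_one_of_sq hub (norm_nonneg _)
  -- derivative of φ = g ∘ γ
  have hγd : HasDerivWithinAt (fun t : ℝ => z₀ - t • X) (-X) (Set.Icc 0 t₀) 0 := by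
    have h1 : HasDerivAt (fun t : ℝ => z₀ - t • X) (-((1:ℝ) • X)) 0 :=
      ((hasDerivAt_id (0:ℝ)).smul_const X).const_sub z₀
    rw [one_smul] at h1
    exact h1.hasDerivWithinAt
  have hγ00 : z₀ = z₀ - (0:ℝ) • X := by simp
  have hmapsS : Set.MapsTo (fun t : ℝ => z₀ - t • X) (Set.Icc 0 t₀) S :=
    fun t ht => hKS (hγmem t ht)
  have hfd : HasFDerivWithinAt f (fderivWithin ℝ f S z₀) S z₀ :=
    ((hf1.differentiableOn one_ne_zero) z₀ hz₀S).hasFDerivWithinAt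
  have hφ1 : HasDerivWithinAt (fun t : ℝ => f (z₀ - t • X))
      (fderivWithin ℝ f S z₀ (-X)) (Set.Icc 0 t₀) 0 :=
    hfd.comp_hasDerivWithinAt_of_eq 0 hγd hmapsS hγ00
  have hφ2 : HasDerivWithinAt (fun t : ℝ => vb (z₀ - t • X))
      (vD z₀ (-X)) (Set.Icc 0 t₀) 0 :=
    (hasFDerivAt_vb hz₀ne).comp_hasDerivWithinAt_of_eq 0 hγd hγ00
  have hφd : HasDerivWithinAt (fun t : ℝ => g (z₀ - t • X))
      (fderivWithin ℝ f S z₀ (-X) + ε * vD z₀ (-X)) (Set.Icc 0 t₀) 0 :=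
    hφ1.add (hφ2.const_mul ε)
  -- the slope is nonpositive
  set m : ℝ := fderivWithin ℝ f S z₀ (-X) + ε * vD z₀ (-X) with hmdef
  have hsl := hasDerivWithinAt_iff_tendsto_slope.mp hφd
  rw [Set.Icc_diff_left] at hsl
  haveI hnb : (nhdsWithin (0:ℝ) (Set.Ioc 0 t₀)).NeBot := by
    apply mem_closure_iff_nhdsWithin_neBot.mp
    rw [closure_Ioc (ne_of_gt ht₀pos).symm]
    exact ⟨le_refl 0, le_of_lt ht₀pos⟩
  have hm : m ≤ 0 := by
    refine le_of_tendsto hsl ?_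
    filter_upwards [self_mem_nhdsWithin] with t ht
    rw [slope_def_field]
    have hγt : z₀ - t • X ∈ K := hγmem t ⟨le_of_lt ht.1, ht.2⟩
    have h1 : g (z₀ - t • X) ≤ f z₀ := key _ hγt
    have h2 : g (z₀ - (0:ℝ) • X) = f z₀ := by
      rw [← hγ00]; exact hgz₀
    apply div_nonpos_of_nonpos_of_nonneg
    · rw [h2]; linarith
    · linarith [ht.1]
  -- compute m
  have hvD : vD z₀ (-X) = 2 * c := by
    have : vD z₀ (-X) = -((qf z₀) ^ 2)⁻¹ * (2 * z₀.re * (-X).re + 2 * z₀.im * (-X).im) := by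
      simp [vD, qD_apply]
    rw [this, hqfz₀, Complex.neg_re, Complex.neg_im, hc]
    ring
  have hneg : fderivWithin ℝ f S z₀ (-X) = -(fderivWithin ℝ f S z₀ X) := by
    rw [map_neg]
  rw [hmdef, hvD, hneg] at hm
  have : 0 < ε * (2 * c) := by positivity
  linarith
end

section
/- Let f : D² → ℂ be holomorphic on the closed unit disk with power series f(z) = Σ_{k≥0} a_k z^k, satisfying conj(z)f(z) + z·conj(f(z)) = c on ∂D² for a real constant c, f(0) = 0, and Im f(1) = 0 . Then c = 0 forces f ≡ 0. -/
open Complex MeasureTheory Real intervalIntegral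
open scoped ENNReal

lemma stmt16_norm_exp (m : ℤ) (θ : ℝ) : ‖Complex.exp ((m:ℂ) * θ * I)‖ = 1 := by
  rw [Complex.norm_exp]
  simp [Complex.mul_re, Complex.mul_im]

lemma stmt16_cont_exp (m : ℤ) : Continuous fun θ : ℝ => Complex.exp ((m:ℂ) * θ * I) :=
  Complex.continuous_exp.comp ((continuous_const.mul Complex.continuous_ofReal).mul continuous_const)

lemma stmt16_int_exp (m : ℤ) : (∫ θ in (0:ℝ)..(2*π), Complex.exp ((m:ℂ) * θ * I)) =
    if m = 0 then ((2*π : ℝ):ℂ) else 0 := by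
  rcases eq_or_ne m 0 with h | h
  · simp [h]
  · have hc : (m:ℂ) * I ≠ 0 := by simp [Complex.ext_iff, h]
    have h2 := integral_exp_mul_complex (a := 0) (b := 2*π) hc
    have he : Complex.exp ((m:ℂ)*I*((2*π:ℝ):ℂ)) = 1 := by
      have := Complex.exp_int_mul_two_pi_mul_I m
      rw [← this]; push_cast; ring_nf
    simp only [h, if_false]
    calc (∫ θ in (0:ℝ)..(2*π), Complex.exp ((m:ℂ) * θ * I))
        = (∫ θ in (0:ℝ)..(2*π), Complex.exp ((m:ℂ) * I * θ)) := by
          congr 1; ext θ; ring_nf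
      _ = 0 := by rw [h2, he]; simp

lemma stmt16_intg (m₁ m₂ : ℤ) (b₁ b₂ : ℂ) :
    (∫ θ in (0:ℝ)..(2*π), (b₁ * Complex.exp ((m₁:ℂ) * θ * I)
        + b₂ * Complex.exp ((m₂:ℂ) * θ * I)))
      = b₁ * (if m₁ = 0 then ((2*π : ℝ):ℂ) else 0)
        + b₂ * (if m₂ = 0 then ((2*π : ℝ):ℂ) else 0) := by
  rw [intervalIntegral.integral_add, intervalIntegral.integral_const_mul,
    intervalIntegral.integral_const_mul, stmt16_int_exp, stmt16_int_exp]
  · exact (Continuous.intervalIntegrable (continuous_const.mul (stmt16_cont_exp m₁)) _ _)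
  · exact (Continuous.intervalIntegrable (continuous_const.mul (stmt16_cont_exp m₂)) _ _)

lemma stmt16_swap (f : ℕ → ℝ → ℂ) (hmeas : ∀ k, Continuous (f k)) (C : ℕ → ℝ)
    (hC : ∀ k θ, ‖f k θ‖ ≤ C k) (hCs : Summable C) :
    (∫ θ in (0:ℝ)..(2*π), ∑' k, f k θ) = ∑' k, ∫ θ in (0:ℝ)..(2*π), f k θ := by
  have hle : (0:ℝ) ≤ 2*π := by positivity
  have hCnn : ∀ k, 0 ≤ C k := fun k => le_trans (norm_nonneg _) (hC k 0)
  rw [intervalIntegral.integral_of_le hle]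
  have := MeasureTheory.integral_tsum (μ := volume.restrict (Set.Ioc (0:ℝ) (2*π)))
      (f := f) (fun k => (hmeas k).aestronglyMeasurable) ?_
  · rw [this]
    congr 1; ext k
    rw [intervalIntegral.integral_of_le hle]
  · have hbound : ∀ k, (∫⁻ θ, ‖f k θ‖₊ ∂(volume.restrict (Set.Ioc (0:ℝ) (2*π))))
        ≤ ENNReal.ofReal (C k) * ENNReal.ofReal (2*π) := by
      intro k
      calc (∫⁻ θ, ‖f k θ‖₊ ∂(volume.restrict (Set.Ioc (0:ℝ) (2*π))))
          ≤ ∫⁻ _, ENNReal.ofReal (C k) ∂(volume.restrict (Set.Ioc (0:ℝ) (2*π))) := by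
            apply lintegral_mono
            intro θ
            simp only []
            rw [show ((‖f k θ‖₊ : ℝ≥0∞)) = ENNReal.ofReal ‖f k θ‖ from (ofReal_norm _).symm]
            exact ENNReal.ofReal_le_ofReal (hC k θ)
        _ = ENNReal.ofReal (C k) * ENNReal.ofReal (2*π) := by
            rw [lintegral_const, Measure.restrict_apply_univ, Real.volume_Ioc]
            norm_num
    have hlt : (∑' k, ∫⁻ θ, ‖f k θ‖₊ ∂(volume.restrict (Set.Ioc (0:ℝ) (2*π)))) < ⊤ := by
      calc (∑' k, ∫⁻ θ, ‖f k θ‖₊ ∂(volume.restrict (Set.Ioc (0:ℝ) (2*π))))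
          ≤ ∑' k, ENNReal.ofReal (C k) * ENNReal.ofReal (2*π) := ENNReal.tsum_le_tsum hbound
        _ = (∑' k, ENNReal.ofReal (C k)) * ENNReal.ofReal (2*π) := ENNReal.tsum_mul_right
        _ = ENNReal.ofReal (∑' k, C k) * ENNReal.ofReal (2*π) := by
            rw [← ENNReal.ofReal_tsum_of_nonneg hCnn hCs]
        _ < ⊤ := by finiteness
    exact hlt.ne

lemma stmt16_series_zero (n : ℕ) (a : ℕ → ℂ) (hsum : Summable fun k => ‖a k‖)
    (hbc : ∀ z : ℂ, ‖z‖ = 1 →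
      (starRingEnd ℂ) z * (∑' k, a k * z ^ k)
          + z * (starRingEnd ℂ) (∑' k, a k * z ^ k) = 0) (θ : ℝ) :
    ∑' k, (a k * Complex.exp ((((k:ℤ) - 1 - n : ℤ) :ℂ) * θ * I)
      + (starRingEnd ℂ) (a k) * Complex.exp ((((1 - k - n : ℤ)) :ℂ) * θ * I)) = 0 := by
  set z : ℂ := Complex.exp (θ * I) with hz
  have hnz : ‖z‖ = 1 := by
    rw [hz, Complex.norm_exp]; simp
  have hzc : (starRingEnd ℂ) z = Complex.exp (-(θ * I)) := by
    rw [hz, ← Complex.exp_conj]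
    congr 1
    simp [Complex.ext_iff]
  have hb := hbc z hnz
  have e1 : ∀ k : ℕ, a k * Complex.exp ((((k:ℤ) - 1 - n : ℤ) :ℂ) * θ * I)
      = (a k * z ^ k) * ((starRingEnd ℂ) z * Complex.exp ((-(n:ℂ)) * θ * I)) := by
    intro k
    rw [hzc, hz, ← Complex.exp_nat_mul]
    simp only [mul_assoc, ← Complex.exp_add]
    congr 1
    push_cast
    ring_nf
  have e2 : ∀ k : ℕ, (starRingEnd ℂ) (a k) * Complex.exp ((((1 - k - n : ℤ)) :ℂ) * θ * I)
      = (starRingEnd ℂ) (a k * z ^ k) * (z * Complex.exp ((-(n:ℂ)) * θ * I)) := by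
    intro k
    rw [map_mul, map_pow, hzc, hz, ← Complex.exp_nat_mul]
    simp only [mul_assoc, ← Complex.exp_add]
    congr 1
    push_cast
    ring_nf
  have hs1 : Summable fun k => (a k * z ^ k) * ((starRingEnd ℂ) z * Complex.exp ((-(n:ℂ)) * θ * I)) := by
    apply Summable.mul_right
    apply Summable.of_norm
    exact hsum.congr fun k => by rw [norm_mul, norm_pow, hnz, one_pow, mul_one]
  have hs2 : Summable fun k => (starRingEnd ℂ) (a k * z ^ k) * (z * Complex.exp ((-(n:ℂ)) * θ * I)) := by
    apply Summable.mul_right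
    apply Summable.of_norm
    exact hsum.congr fun k => by
      rw [starRingEnd_apply, norm_star, norm_mul, norm_pow, hnz, one_pow, mul_one]
  calc ∑' k, (a k * Complex.exp ((((k:ℤ) - 1 - n : ℤ) :ℂ) * θ * I)
      + (starRingEnd ℂ) (a k) * Complex.exp ((((1 - k - n : ℤ)) :ℂ) * θ * I))
      = ∑' k, ((a k * z ^ k) * ((starRingEnd ℂ) z * Complex.exp ((-(n:ℂ)) * θ * I))
        + (starRingEnd ℂ) (a k * z ^ k) * (z * Complex.exp ((-(n:ℂ)) * θ * I))) := by
        congr 1; funext k; rw [e1 k, e2 k]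
    _ = (∑' k, (a k * z ^ k)) * ((starRingEnd ℂ) z * Complex.exp ((-(n:ℂ)) * θ * I))
        + (∑' k, (starRingEnd ℂ) (a k * z ^ k)) * (z * Complex.exp ((-(n:ℂ)) * θ * I)) := by
        rw [hs1.tsum_add hs2, tsum_mul_right, tsum_mul_right]
    _ = ((starRingEnd ℂ) z * (∑' k, a k * z ^ k)
          + z * (starRingEnd ℂ) (∑' k, a k * z ^ k)) * Complex.exp ((-(n:ℂ)) * θ * I) := by
        rw [show (∑' k, (starRingEnd ℂ) (a k * z ^ k)) = (starRingEnd ℂ) (∑' k, a k * z ^ k) by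
          simp only [starRingEnd_apply]; exact tsum_star.symm]
        ring
    _ = 0 := by rw [hb, zero_mul]

/-- A holomorphic function `f(z) = Σ aₖ zᵏ` on the closed unit disk satisfying the
boundary condition `z̄·f(z) + z·f(z)̄ = c` on the circle with `c = 0`, `f(0) = 0`
and `Im f(1) = 0` vanishes identically. -/
theorem stmt16 (c : ℝ) (a : ℕ → ℂ) (hsum : Summable fun k => ‖a k‖)
    (hbc : ∀ z : ℂ, ‖z‖ = 1 →
      (starRingEnd ℂ) z * (∑' k, a k * z ^ k)
          + z * (starRingEnd ℂ) (∑' k, a k * z ^ k) = ((c : ℝ) : ℂ))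
    (h0 : a 0 = 0)
    (h1 : (∑' k, a k * (1 : ℂ) ^ k).im = 0)
    (hc : c = 0) :
    ∀ k, a k = 0 := by
  have hbc0 : ∀ z : ℂ, ‖z‖ = 1 →
      (starRingEnd ℂ) z * (∑' k, a k * z ^ k)
          + z * (starRingEnd ℂ) (∑' k, a k * z ^ k) = 0 := by
    intro z hznorm
    simpa [hc] using hbc z hznorm
  have hπ : ((2*π : ℝ):ℂ) ≠ 0 := by
    simp [Complex.ext_iff, Real.pi_ne_zero]
  -- key relation for each n
  have key : ∀ n : ℕ,
      (∑' k, (a k * (if ((k:ℤ) - 1 - n : ℤ) = 0 then ((2*π : ℝ):ℂ) else 0)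
        + (starRingEnd ℂ) (a k) * (if ((1 - k - n : ℤ)) = 0 then ((2*π : ℝ):ℂ) else 0))) = 0 := by
    intro n
    have hcont : ∀ k : ℕ, Continuous fun θ : ℝ =>
        (a k * Complex.exp ((((k:ℤ) - 1 - n : ℤ) :ℂ) * θ * I)
          + (starRingEnd ℂ) (a k) * Complex.exp ((((1 - k - n : ℤ)) :ℂ) * θ * I)) := by
      intro k
      exact (continuous_const.mul (stmt16_cont_exp _)).add
        (continuous_const.mul (stmt16_cont_exp _))
    have hbound : ∀ (k : ℕ) (θ : ℝ),
        ‖a k * Complex.exp ((((k:ℤ) - 1 - n : ℤ) :ℂ) * θ * I)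
          + (starRingEnd ℂ) (a k) * Complex.exp ((((1 - k - n : ℤ)) :ℂ) * θ * I)‖
        ≤ 2 * ‖a k‖ := by
      intro k θ
      calc ‖a k * Complex.exp ((((k:ℤ) - 1 - n : ℤ) :ℂ) * θ * I)
            + (starRingEnd ℂ) (a k) * Complex.exp ((((1 - k - n : ℤ)) :ℂ) * θ * I)‖
          ≤ ‖a k * Complex.exp ((((k:ℤ) - 1 - n : ℤ) :ℂ) * θ * I)‖
            + ‖(starRingEnd ℂ) (a k) * Complex.exp ((((1 - k - n : ℤ)) :ℂ) * θ * I)‖ :=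
            norm_add_le _ _
        _ = 2 * ‖a k‖ := by
            rw [norm_mul, norm_mul, stmt16_norm_exp, stmt16_norm_exp,
              starRingEnd_apply, norm_star]
            ring
    calc (∑' k, (a k * (if ((k:ℤ) - 1 - n : ℤ) = 0 then ((2*π : ℝ):ℂ) else 0)
        + (starRingEnd ℂ) (a k) * (if ((1 - k - n : ℤ)) = 0 then ((2*π : ℝ):ℂ) else 0)))
        = ∑' k, ∫ θ in (0:ℝ)..(2*π),
            (a k * Complex.exp ((((k:ℤ) - 1 - n : ℤ) :ℂ) * θ * I)
              + (starRingEnd ℂ) (a k) * Complex.exp ((((1 - k - n : ℤ)) :ℂ) * θ * I)) := by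
          congr 1; funext k
          rw [stmt16_intg]
      _ = ∫ θ in (0:ℝ)..(2*π), ∑' k,
            (a k * Complex.exp ((((k:ℤ) - 1 - n : ℤ) :ℂ) * θ * I)
              + (starRingEnd ℂ) (a k) * Complex.exp ((((1 - k - n : ℤ)) :ℂ) * θ * I)) :=
          (stmt16_swap _ hcont (fun k => 2 * ‖a k‖) hbound (hsum.mul_left 2)).symm
      _ = ∫ θ in (0:ℝ)..(2*π), (0:ℂ) := by
          apply intervalIntegral.integral_congr
          intro θ _
          exact stmt16_series_zero n a hsum hbc0 θ
      _ = 0 := by simp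
  -- a k = 0 for k ≥ 2
  have h2 : ∀ n : ℕ, 1 ≤ n → a (n + 1) = 0 := by
    intro n hn
    have hk := key n
    have hside : ∀ k : ℕ, k ≠ n + 1 →
        (a k * (if ((k:ℤ) - 1 - n : ℤ) = 0 then ((2*π : ℝ):ℂ) else 0)
          + (starRingEnd ℂ) (a k) * (if ((1 - k - n : ℤ)) = 0 then ((2*π : ℝ):ℂ) else 0)) = 0 := by
      intro k hk'
      have hif1 : ¬ (((k:ℕ):ℤ) - 1 - n = 0) := by
        intro h; apply hk'; omega
      rw [if_neg hif1, mul_zero, zero_add]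
      by_cases hif2 : ((1 - (k:ℤ) - n : ℤ)) = 0
      · have hk0 : k = 0 := by omega
        rw [hk0, h0, map_zero, zero_mul]
      · rw [if_neg hif2, mul_zero]
    rw [tsum_eq_single (n + 1) hside] at hk
    have hif1 : ((((n:ℕ)+1 :ℕ):ℤ) - 1 - n : ℤ) = 0 := by push_cast; ring
    have hif2 : ((1 - (((n:ℕ)+1:ℕ)) - n : ℤ)) ≠ 0 := by push_cast; omega
    rw [if_pos hif1, if_neg hif2, mul_zero, add_zero] at hk
    exact (mul_eq_zero.mp hk).resolve_right hπ
  -- Re a 1 = 0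
  have hre : (a 1).re = 0 := by
    have hk := key 0
    have hside : ∀ k : ℕ, k ≠ 1 →
        (a k * (if ((k:ℤ) - 1 - (0:ℕ) : ℤ) = 0 then ((2*π : ℝ):ℂ) else 0)
          + (starRingEnd ℂ) (a k) * (if ((1 - k - (0:ℕ) : ℤ)) = 0 then ((2*π : ℝ):ℂ) else 0)) = 0 := by
      intro k hk'
      have hif1 : ¬ (((k:ℕ):ℤ) - 1 - ((0:ℕ):ℤ) = 0) := by
        intro h; apply hk'; omega
      have hif2 : ¬ ((1 - (k:ℤ) - ((0:ℕ):ℤ) : ℤ) = 0) := by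
        intro h; apply hk'; omega
      rw [if_neg hif1, if_neg hif2, mul_zero, mul_zero, add_zero]
    rw [tsum_eq_single 1 hside] at hk
    have hif1 : (((1:ℕ):ℤ) - 1 - ((0:ℕ):ℤ) : ℤ) = 0 := by norm_num
    have hif2 : ((1 - ((1:ℕ):ℤ) - ((0:ℕ):ℤ) : ℤ)) = 0 := by norm_num
    rw [if_pos hif1, if_pos hif2] at hk
    have h3' : (a 1 + (starRingEnd ℂ) (a 1)) * ((2*π : ℝ):ℂ) = 0 := by
      rw [add_mul]; exact hk
    have h3 := (mul_eq_zero.mp h3').resolve_right hπ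
    rw [Complex.add_conj] at h3
    have h4 := congrArg Complex.re h3
    simpa using h4
  -- Im a 1 = 0
  have him : (a 1).im = 0 := by
    have : (∑' k, a k * (1 : ℂ) ^ k) = a 1 := by
      rw [tsum_eq_single 1]
      · simp
      · intro k hk'
        match k, hk' with
        | 0, _ => simp [h0]
        | 1, h => exact absurd rfl h
        | (m+2), _ => simp [h2 (m+1) (by omega)]
    rw [this] at h1
    exact h1
  have ha1 : a 1 = 0 := by
    apply Complex.ext <;> simp [hre, him]
  intro k
  match k with
  | 0 => exact h0
  | 1 => exact ha1
  | (m+2) => exact h2 (m+1) (by omega)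
end
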